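/- Let F ⊂ ℂ be a finite set and let u : ℂ∖F → ℝ be subharmonic and bounded (i.e., sup_{ℂ∖F} |u| < ∞). Then u is constant. -/

import Mathlib

open MeasureTheory
open Metric Complex Set

/-- `u` is subharmonic on `U`: it is upper semicontinuous on `U` and satisfies the
sub-mean value inequality on all sufficiently small circles around each point of `U`. -/
def SubharmonicOn (u : ℂ → ℝ) (U : Set ℂ) : Prop :=
  UpperSemicontinuousOn u U ∧
  ∀ z ∈ U, ∃ r₀ > (0 : ℝ), ∀ r : ℝ, 0 < r → r < r₀ →
    Metric.closedBall z r ⊆ U ∧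
    u z ≤ (1 / (2 * Real.pi)) *
      ∫ t in (0 : ℝ)..(2 * Real.pi), u (z + (r : ℂ) * Complex.exp ((t : ℂ) * Complex.I))


theorem meanValueHolo {f : ℂ → ℂ} {c : ℂ} {r : ℝ} (hr : 0 < r)
    (hf : ∀ z ∈ closedBall c r, DifferentiableAt ℂ f z) :
    (∫ t in (0:ℝ)..(2*Real.pi), f (circleMap c r t)) = (2*Real.pi : ℝ) • f c := by
  have hd : DifferentiableOn ℂ f (closedBall c r) := fun z hz => (hf z hz).differentiableWithinAt
  have h := hd.circleIntegral_sub_inv_smul (w := c) (mem_ball_self hr)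
  rw [circleIntegral] at h
  have heq : ∀ t : ℝ, deriv (circleMap c r) t • ((circleMap c r t - c)⁻¹ • f (circleMap c r t))
      = Complex.I • f (circleMap c r t) := by
    intro t
    rw [deriv_circleMap, circleMap_sub_center, smul_eq_mul, smul_eq_mul, smul_eq_mul]
    have hne : circleMap 0 r t ≠ 0 := by
      simpa [circleMap_sub_center] using sub_ne_zero.2 (circleMap_ne_center (c := c) hr.ne' (θ := t))
    field_simp
  simp only [heq] at h
  rw [intervalIntegral.integral_smul] at h
  have h2 : Complex.I • (∫ t in (0:ℝ)..(2*Real.pi), f (circleMap c r t))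
      = Complex.I • ((2*Real.pi : ℝ) • f c) := by
    rw [h]
    simp only [smul_eq_mul, Complex.real_smul]
    push_cast
    ring
  exact smul_right_injective ℂ Complex.I_ne_zero h2

/-- Mean value property for `log |· - p|` on circles not surrounding `p`. -/
theorem logAbsMean {c p : ℂ} {r : ℝ} (hr : 0 < r) (hcp : r < dist c p) :
    (∫ t in (0:ℝ)..(2*Real.pi), Real.log (‖circleMap c r t - p‖))
      = (2*Real.pi) * Real.log (‖c - p‖) := by
  set a : ℂ := c - p with ha
  have ha0 : a ≠ 0 := by
    rw [ha, sub_ne_zero]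
    intro h; rw [h] at hcp; simp at hcp; linarith
  have habs : r < ‖a‖ := by rwa [ha, ← Complex.dist_eq]
  have habs0 : (0:ℝ) < ‖a‖ := lt_trans hr habs
  set g : ℂ → ℂ := fun w => Complex.log ((w - p) / a) with hg
  have hmem : ∀ z ∈ closedBall c r, (z - p) / a ∈ Complex.slitPlane := by
    intro z hz
    have h1 : ‖(z - p) / a - 1‖ < 1 := by
      have heq2 : (z - p) / a - 1 = (z - c) / a := by field_simp; ring
      rw [heq2, norm_div, div_lt_one habs0]
      calc ‖z - c‖ ≤ r := by rwa [← Complex.dist_eq, ← mem_closedBall]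
        _ < ‖a‖ := habs
    apply Complex.mem_slitPlane_iff.2
    left
    have h0 := Complex.abs_re_le_norm ((z - p) / a - 1)
    have h2 : |((z - p) / a).re - 1| < 1 := by
      simpa using lt_of_le_of_lt (by simpa using h0) h1
    linarith [(abs_lt.1 h2).1]
  have hdiff : ∀ z ∈ closedBall c r, DifferentiableAt ℂ g z := by
    intro z hz
    have : DifferentiableAt ℂ (fun w : ℂ => (w - p) / a) z := by fun_prop
    exact (Complex.differentiableAt_log (hmem z hz)).comp z this
  have hMV := meanValueHolo hr hdiff
  have hgc : g c = 0 := by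
    simp only [hg, ← ha, div_self ha0, Complex.log_one]
  rw [hgc, smul_zero] at hMV
  have hint : IntervalIntegrable (fun t => g (circleMap c r t)) volume 0 (2*Real.pi) := by
    apply ContinuousOn.intervalIntegrable
    intro t ht
    apply ContinuousAt.continuousWithinAt
    have hcm : circleMap c r t ∈ closedBall c r := circleMap_mem_closedBall c hr.le t
    have hc1 : ContinuousAt (fun w : ℂ => (w - p) / a) (circleMap c r t) := by fun_prop
    exact ContinuousAt.comp (g := Complex.log) ((Complex.differentiableAt_log (hmem _ hcm)).continuousAt)
      (ContinuousAt.comp (g := fun w : ℂ => (w - p) / a) hc1 (continuous_circleMap c r).continuousAt)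
  have hre := Complex.reCLM.intervalIntegral_comp_comm hint
  rw [hMV] at hre
  simp only [map_zero] at hre
  have hptne : ∀ t : ℝ, ‖circleMap c r t - p‖ ≠ 0 := by
    intro t
    have hcm : circleMap c r t ∈ closedBall c r := circleMap_mem_closedBall c hr.le t
    intro h
    have h2 : circleMap c r t = p := sub_eq_zero.1 (norm_eq_zero.1 h)
    have : dist c p ≤ r := by
      rw [← h2, dist_comm]; exact hcm
    linarith
  have hgre : (fun t : ℝ => Complex.reCLM (g (circleMap c r t)))
      = fun t => Real.log (‖circleMap c r t - p‖) - Real.log (‖a‖) := by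
    funext t
    simp only [Complex.reCLM_apply, hg, Complex.log_re, norm_div]
    rw [Real.log_div (hptne t) (ne_of_gt habs0)]
  rw [hgre] at hre
  have hint2 : IntervalIntegrable
      (fun t => Real.log (‖circleMap c r t - p‖)) volume 0 (2*Real.pi) := by
    apply ContinuousOn.intervalIntegrable
    intro t ht
    apply ContinuousAt.continuousWithinAt
    have hca : ContinuousAt (fun t : ℝ => ‖circleMap c r t - p‖) t :=
      continuous_norm.continuousAt.comp (by fun_prop)
    exact ContinuousAt.comp (g := Real.log) (Real.continuousAt_log (hptne t)) hca
  rw [intervalIntegral.integral_sub hint2 intervalIntegrable_const,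
    intervalIntegral.integral_const, smul_eq_mul, sub_zero, sub_eq_zero] at hre
  rw [hre]


/-- An upper semicontinuous function on a nonempty compact set attains its maximum. -/
theorem uscMaxOn {K : Set ℂ} (hK : IsCompact K) (hne : K.Nonempty) {f : ℂ → ℝ}
    (hf : UpperSemicontinuousOn f K) : ∃ x ∈ K, ∀ y ∈ K, f y ≤ f x := by
  by_contra hcon
  push_neg at hcon
  have hch : ∀ x : ℂ, x ∈ K → ∃ y ∈ K, f x < f y := by
    intro x hx
    obtain ⟨y, hy, hlt⟩ := hcon x hx
    exact ⟨y, hy, hlt⟩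
  choose! y hyK hylt using hch
  have hU : ∀ x (hx : x ∈ K), ∃ V : Set ℂ, IsOpen V ∧ x ∈ V ∧ ∀ w ∈ V ∩ K, f w < f (y x) := by
    intro x hx
    have := hf x hx (f (y x)) (hylt x hx)
    rw [eventually_nhdsWithin_iff] at this
    obtain ⟨V, hVsub, hVopen, hxV⟩ := _root_.eventually_nhds_iff.1 this
    exact ⟨V, hVopen, hxV, fun w hw => hVsub w hw.1 hw.2⟩
  choose V hVopen hxV hVlt using hU
  obtain ⟨t, hcover⟩ := hK.elim_nhds_subcover' V (fun x hx => (hVopen x hx).mem_nhds (hxV x hx))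
  have htne : t.Nonempty := by
    obtain ⟨z, hz⟩ := hne
    obtain ⟨x, hxt, -⟩ := Set.mem_iUnion₂.1 (hcover hz)
    exact ⟨x, hxt⟩
  obtain ⟨x₀, hx₀t, hx₀max⟩ := Finset.exists_max_image t (fun x => f (y x)) htne
  have hyK0 : y x₀ ∈ K := hyK x₀ x₀.2
  obtain ⟨x₁, hx₁t, hx₁V⟩ := Set.mem_iUnion₂.1 (hcover hyK0)
  have h1 : f (y x₀) < f (y x₁) := hVlt x₁ x₁.2 _ ⟨hx₁V, hyK0⟩
  exact absurd (hx₀max x₁ hx₁t) (not_le.2 h1)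



theorem circleMap_eq' (c : ℂ) (R t : ℝ) :
    c + (R : ℂ) * Complex.exp ((t : ℂ) * Complex.I) = circleMap c R t := rfl

/-- usc at a point of an open set. -/
theorem usc_at_of_open {U : Set ℂ} (hU : IsOpen U) {u : ℂ → ℝ}
    (h : UpperSemicontinuousOn u U) {z : ℂ} (hz : z ∈ U) : UpperSemicontinuousAt u z := by
  have := h z hz
  rw [upperSemicontinuousAt_iff]
  intro y hy
  have h2 := upperSemicontinuousWithinAt_iff.1 this y hy
  rwa [nhdsWithin_eq_nhds.2 (hU.mem_nhds hz)] at h2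

/-- A bounded-on-circles usc function is interval integrable on circles. -/
theorem circle_intervalIntegrable {U : Set ℂ} (hU : IsOpen U) {u : ℂ → ℝ}
    (husc : UpperSemicontinuousOn u U) {C : ℝ} (hC : ∀ z ∈ U, |u z| ≤ C)
    {z : ℂ} {r : ℝ} (hball : closedBall z r ⊆ U) (hr : 0 ≤ r) :
    IntervalIntegrable (fun t => u (circleMap z r t)) volume 0 (2 * Real.pi) := by
  have hmem : ∀ t : ℝ, circleMap z r t ∈ U := fun t => hball (circleMap_mem_closedBall z hr t)
  have husc2 : UpperSemicontinuous (fun t => u (circleMap z r t)) := by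
    intro t c hc
    have h1 := usc_at_of_open hU husc (hmem t) c hc
    exact ((continuous_circleMap z r).continuousAt).eventually h1
  have hmeas : Measurable (fun t => u (circleMap z r t)) := husc2.measurable
  rw [intervalIntegrable_iff]
  apply Integrable.mono' (g := fun _ => C) (integrableOn_const measure_Ioc_lt_top.ne)
  · exact hmeas.aestronglyMeasurable
  · exact Filter.Eventually.of_forall fun t => by
      rw [Real.norm_eq_abs]; exact hC _ (hmem t)

/-- Strong maximum principle for subharmonic functions. -/
theorem strongMaxPrinciple {V : Set ℂ} (hV : IsOpen V) (hVc : IsPreconnected V) {v : ℂ → ℝ}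
    (hsub : SubharmonicOn v V) {C : ℝ} (hC : ∀ z ∈ V, |v z| ≤ C)
    {x : ℂ} (hx : x ∈ V) (hmax : ∀ z ∈ V, v z ≤ v x) :
    ∀ z ∈ V, v z = v x := by
  set E : Set ℂ := {z ∈ V | v z = v x} with hE
  set E' : Set ℂ := {z ∈ V | v z < v x} with hE'
  have hE'open : IsOpen E' := by
    rw [isOpen_iff_mem_nhds]
    intro z hz
    have h1 : ∀ᶠ w in nhds z, v w < v x := usc_at_of_open hV hsub.1 hz.1 (v x) hz.2
    filter_upwards [h1, hV.mem_nhds hz.1] with w hw1 hw2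
    exact ⟨hw2, hw1⟩
  have hEopen : IsOpen E := by
    rw [isOpen_iff_mem_nhds]
    intro z hz
    obtain ⟨r₀, hr₀, hsm⟩ := hsub.2 z hz.1
    have hball : ball z r₀ ⊆ E := by
      intro w hw
      rcases eq_or_ne w z with rfl | hwz
      · exact hz
      set r := dist w z with hrdef
      have hrpos : 0 < r := dist_pos.2 hwz
      have hrlt : r < r₀ := hw
      obtain ⟨hcb, hineq⟩ := hsm r hrpos hrlt
      -- the circle integrand
      set g : ℝ → ℝ := fun t => v (circleMap z r t) with hg
      have hieq : (∫ t in (0:ℝ)..(2*Real.pi),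
          v (z + (r : ℂ) * Complex.exp ((t : ℂ) * Complex.I))) = ∫ t in (0:ℝ)..(2*Real.pi), g t := by
        simp only [circleMap_eq', hg]
      rw [hieq] at hineq
      have hint : IntervalIntegrable g volume 0 (2*Real.pi) :=
        circle_intervalIntegrable hV hsub.1 hC hcb hrpos.le
      have hgle : ∀ t : ℝ, g t ≤ v x := fun t =>
        hmax _ (hcb (circleMap_mem_closedBall z hrpos.le t))
      have hub : (∫ t in (0:ℝ)..(2*Real.pi), g t) ≤ 2 * Real.pi * v x := by
        calc (∫ t in (0:ℝ)..(2*Real.pi), g t)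
            ≤ ∫ _t in (0:ℝ)..(2*Real.pi), v x := by
              apply intervalIntegral.integral_mono_on Real.two_pi_pos.le hint
                intervalIntegrable_const
              exact fun t _ => hgle t
          _ = 2 * Real.pi * v x := by rw [intervalIntegral.integral_const, smul_eq_mul]; ring
      have hlb : 2 * Real.pi * v x ≤ (∫ t in (0:ℝ)..(2*Real.pi), g t) := by
        have h2 : v x ≤ (1 / (2 * Real.pi)) * ∫ t in (0:ℝ)..(2*Real.pi), g t := hz.2 ▸ hineq
        have h3 := mul_le_mul_of_nonneg_left h2 Real.two_pi_pos.le
        calc 2 * Real.pi * v x ≤ 2 * Real.pi * ((1 / (2 * Real.pi)) * ∫ t in (0:ℝ)..(2*Real.pi), g t) := h3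
          _ = ∫ t in (0:ℝ)..(2*Real.pi), g t := by field_simp
      have hzero : (∫ t in (0:ℝ)..(2*Real.pi), (fun t => v x - g t) t) = 0 := by
        rw [intervalIntegral.integral_sub intervalIntegrable_const hint,
          intervalIntegral.integral_const, smul_eq_mul]
        linarith
      have hnn : 0 ≤ᵐ[volume.restrict (Set.Ioc (0:ℝ) (2*Real.pi) ∪ Set.Ioc (2*Real.pi) 0)]
          (fun t => v x - g t) := by
        apply Filter.Eventually.of_forall
        intro t
        simp only [Pi.zero_apply, sub_nonneg]
        exact hgle t
      have hintsub : IntervalIntegrable (fun t => v x - g t) volume 0 (2*Real.pi) :=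
        (intervalIntegrable_const (c := v x)).sub hint
      have hae := (intervalIntegral.integral_eq_zero_iff_of_nonneg_ae hnn hintsub).1 hzero
      -- w is on the circle
      have hwsphere : w ∈ sphere z r := by rw [mem_sphere]
      obtain ⟨tw, hwt⟩ : ∃ t, circleMap z r t = w := by
        have : w ∈ Set.range (circleMap z r) := by
          rw [range_circleMap]
          rwa [abs_of_pos hrpos]
        exact this
      obtain ⟨τ, hτ, hτeq⟩ := (periodic_circleMap z r).exists_mem_Ioc Real.two_pi_pos tw 0
      rw [zero_add] at hτ
      have hwτ : circleMap z r τ = w := by rw [← hτeq, hwt]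
      -- w ∈ V
      have hwV : w ∈ V := hcb (sphere_subset_closedBall hwsphere)
      refine ⟨hwV, ?_⟩
      by_contra hne
      have hwlt : v w < v x := lt_of_le_of_ne (hmax w hwV) hne
      -- usc at w gives a ball where v < v x
      have h1 : ∀ᶠ y in nhds w, v y < v x := usc_at_of_open hV hsub.1 hwV (v x) hwlt
      obtain ⟨δ, hδpos, hδ⟩ := Metric.eventually_nhds_iff_ball.1 h1
      -- pull back to an interval of parameters
      have hcont : ContinuousAt (circleMap z r) τ := (continuous_circleMap z r).continuousAt
      have h2 : ∀ᶠ t in nhds τ, circleMap z r t ∈ ball w δ := by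
        apply hcont.eventually_mem
        rw [hwτ]
        exact ball_mem_nhds w hδpos
      obtain ⟨η, hηpos, hη⟩ := Metric.eventually_nhds_iff_ball.1 h2
      set a : ℝ := max 0 (τ - η) with ha
      have haτ : a < τ := by
        rw [ha, max_lt_iff]
        constructor
        · exact hτ.1
        · linarith
      have hJsub : Set.Ioo a τ ⊆ {t : ℝ | v x - g t ≠ 0} := by
        intro t ht
        have htb : t ∈ ball τ η := by
          rw [mem_ball, Real.dist_eq, abs_lt]
          constructor
          · have : τ - η ≤ a := le_max_right _ _
            linarith [ht.1]
          · linarith [ht.2]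
        have hlt2 : v (circleMap z r t) < v x := hδ _ (hη _ htb)
        show v x - v (circleMap z r t) ≠ 0
        intro hcontra
        rw [sub_eq_zero] at hcontra
        linarith
      have hJIoc : Set.Ioo a τ ⊆ Set.Ioc (0:ℝ) (2*Real.pi) ∪ Set.Ioc (2*Real.pi) 0 := by
        intro t ht
        left
        constructor
        · exact lt_of_le_of_lt (le_max_left 0 _) ht.1
        · exact le_trans ht.2.le hτ.2
      have hnull : volume.restrict (Set.Ioc (0:ℝ) (2*Real.pi) ∪ Set.Ioc (2*Real.pi) 0)
          {t : ℝ | v x - g t ≠ 0} = 0 := by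
        have h := hae
        rw [Filter.EventuallyEq, Filter.eventually_iff, mem_ae_iff] at h
        simpa [Set.compl_setOf] using h
      have hmono : volume.restrict (Set.Ioc (0:ℝ) (2*Real.pi) ∪ Set.Ioc (2*Real.pi) 0)
          (Set.Ioo a τ) = 0 := measure_mono_null hJsub hnull
      rw [Measure.restrict_apply' (measurableSet_Ioc.union measurableSet_Ioc)] at hmono
      rw [Set.inter_eq_self_of_subset_left hJIoc] at hmono
      rw [Real.volume_Ioo] at hmono
      have : (0:ℝ) < τ - a := by linarith
      simp only [ENNReal.ofReal_eq_zero] at hmono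
      linarith
    exact Filter.mem_of_superset (ball_mem_nhds z hr₀) hball
  -- preconnectedness argument
  intro z hzV
  by_contra hne
  have hzE' : z ∈ E' := ⟨hzV, lt_of_le_of_ne (hmax z hzV) hne⟩
  have hcover : V ⊆ E ∪ E' := by
    intro w hw
    rcases eq_or_lt_of_le (hmax w hw) with h | h
    · exact Or.inl ⟨hw, h⟩
    · exact Or.inr ⟨hw, h⟩
  have hEne : (V ∩ E).Nonempty := ⟨x, hx, hx, rfl⟩
  have hE'ne : (V ∩ E').Nonempty := ⟨z, hzV, hzE'⟩
  obtain ⟨w, -, hwE, hwE'⟩ := hVc E E' hEopen hE'open hcover hEne hE'ne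
  exact absurd hwE.2 (ne_of_lt hwE'.2)

/-- Boundary maximum principle on a bounded open set. -/
theorem boundaryMaxPrinciple {A : Set ℂ} (hA : IsOpen A) (hAb : Bornology.IsBounded A)
    {v : ℂ → ℝ} (husc : UpperSemicontinuousOn v (closure A))
    (hsub : SubharmonicOn v A) {C : ℝ} (hC : ∀ z ∈ closure A, |v z| ≤ C)
    {z : ℂ} (hz : z ∈ A) : ∃ y ∈ frontier A, v z ≤ v y := by
  have hKc : IsCompact (closure A) := Metric.isCompact_of_isClosed_isBounded isClosed_closure hAb.closure
  obtain ⟨x, hxK, hxmax⟩ := uscMaxOn hKc ⟨z, subset_closure hz⟩ husc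
  by_cases hxA : x ∈ A
  · -- interior maximum: propagate along the connected component
    set C₀ : Set ℂ := connectedComponentIn A x with hC₀
    have hC₀open : IsOpen C₀ := hA.connectedComponentIn
    have hC₀sub : C₀ ⊆ A := connectedComponentIn_subset A x
    have hxC₀ : x ∈ C₀ := mem_connectedComponentIn hxA
    have hsubC₀ : SubharmonicOn v C₀ := by
      constructor
      · exact hsub.1.mono hC₀sub
      · intro w hw
        obtain ⟨r₀, hr₀, hsm⟩ := hsub.2 w (hC₀sub hw)
        obtain ⟨ε, hεpos, hεball⟩ := Metric.isOpen_iff.1 hC₀open w hw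
        refine ⟨min r₀ ε, lt_min hr₀ hεpos, fun r hr hrlt => ?_⟩
        refine ⟨?_, (hsm r hr (lt_of_lt_of_le hrlt (min_le_left _ _))).2⟩
        exact fun y hy => hεball (lt_of_le_of_lt hy (lt_of_lt_of_le hrlt (min_le_right _ _)))
    have hconst : ∀ w ∈ C₀, v w = v x := by
      apply strongMaxPrinciple hC₀open isPreconnected_connectedComponentIn hsubC₀
        (fun w hw => hC _ (subset_closure (hC₀sub hw))) hxC₀
      exact fun w hw => hxmax w (subset_closure (hC₀sub hw))
    -- the frontier of the component is nonempty
    have hfne : (frontier C₀).Nonempty := by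
      by_contra hemp
      rw [Set.not_nonempty_iff_eq_empty] at hemp
      have hclopen : IsClopen C₀ := isClopen_iff_frontier_eq_empty.2 hemp
      rcases isClopen_iff.1 hclopen with h | h
      · exact absurd (h ▸ hxC₀) (Set.notMem_empty x)
      · have hbd : Bornology.IsBounded (Set.univ : Set ℂ) := by
          rw [← h]; exact hAb.subset hC₀sub
        have : ¬ Bornology.IsBounded (Set.univ : Set ℂ) := by
          intro hb
          obtain ⟨R, hR⟩ := hb.subset_ball 0
          have := hR (Set.mem_univ ((R+1 : ℝ) : ℂ))
          simp only [mem_ball, Complex.dist_eq, sub_zero] at this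
          rw [Complex.norm_real, Real.norm_eq_abs] at this
          rcases abs_lt.1 this with ⟨h1, h2⟩
          linarith
        exact this hbd
    obtain ⟨y, hy⟩ := hfne
    have hyncl : y ∈ closure C₀ := frontier_subset_closure hy
    have hynC₀ : y ∉ C₀ := by
      rw [hC₀open.frontier_eq] at hy
      exact hy.2
    have hynA : y ∉ A := by
      intro hyA
      have hyC : y ∈ connectedComponentIn A y := mem_connectedComponentIn hyA
      have hopen : IsOpen (connectedComponentIn A y) := hA.connectedComponentIn
      obtain ⟨w, hw1, hw2⟩ := mem_closure_iff.1 hyncl _ hopen hyC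
      have e1 := connectedComponentIn_eq (F := A) hw2
      have e2 := connectedComponentIn_eq (F := A) hw1
      have e3 : connectedComponentIn A y = connectedComponentIn A x := e2.trans e1.symm
      apply hynC₀
      show y ∈ connectedComponentIn A x
      rw [← e3]
      exact mem_connectedComponentIn hyA
    have hyfrA : y ∈ frontier A := by
      rw [hA.frontier_eq]
      exact ⟨closure_mono hC₀sub hyncl, hynA⟩
    refine ⟨y, hyfrA, le_trans (hxmax z (subset_closure hz)) ?_⟩
    -- v x ≤ v y by upper semicontinuity and density of C₀ at y
    by_contra hlt
    push_neg at hlt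
    have hycl : y ∈ closure A := closure_mono hC₀sub hyncl
    have h1 := husc y hycl (v x) hlt
    rw [eventually_nhdsWithin_iff] at h1
    obtain ⟨O, hOsub, hOopen, hyO⟩ := _root_.eventually_nhds_iff.1 h1
    obtain ⟨w, hwO, hwC₀⟩ := mem_closure_iff.1 hyncl O hOopen hyO
    have := hOsub w hwO (subset_closure (hC₀sub hwC₀))
    beta_reduce at this
    rw [hconst w hwC₀] at this
    exact lt_irrefl _ this
  · -- maximum already on the frontier
    refine ⟨x, ?_, hxmax z (subset_closure hz)⟩
    rw [hA.frontier_eq]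
    exact ⟨hxK, hxA⟩

/-- Comparison with `ε log |w - p|` on an annulus: the value at an interior point is
dominated by a value on one of the two boundary circles. -/
theorem annulusBound {U : Set ℂ} (hU : IsOpen U) {u : ℂ → ℝ} (hsub : SubharmonicOn u U)
    {C : ℝ} (hC : ∀ z ∈ U, |u z| ≤ C) {p : ℂ} {r₁ r₂ : ℝ} (h1 : 0 < r₁) (h12 : r₁ < r₂)
    (hann : ∀ w : ℂ, r₁ ≤ dist w p → dist w p ≤ r₂ → w ∈ U) (ε : ℝ)
    {z : ℂ} (hz1 : r₁ < dist z p) (hz2 : dist z p < r₂) :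
    ∃ y : ℂ, (dist y p = r₁ ∨ dist y p = r₂) ∧
      u z + ε * Real.log (dist z p) ≤ u y + ε * Real.log (dist y p) := by
  set A : Set ℂ := {w | r₁ < dist w p ∧ dist w p < r₂} with hA
  have hAopen : IsOpen A := by
    have h1o : IsOpen {w : ℂ | r₁ < dist w p} :=
      isOpen_lt continuous_const (continuous_id.dist continuous_const)
    have h2o : IsOpen {w : ℂ | dist w p < r₂} :=
      isOpen_lt (continuous_id.dist continuous_const) continuous_const
    have : A = {w : ℂ | r₁ < dist w p} ∩ {w : ℂ | dist w p < r₂} := rfl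
    rw [this]; exact h1o.inter h2o
  have hAb : Bornology.IsBounded A :=
    (Metric.isBounded_closedBall (x := p) (r := r₂)).subset
      (fun w hw => mem_closedBall.2 hw.2.le)
  set K' : Set ℂ := {w | r₁ ≤ dist w p ∧ dist w p ≤ r₂} with hK'
  have hK'closed : IsClosed K' := by
    have h1c : IsClosed {w : ℂ | r₁ ≤ dist w p} :=
      isClosed_le continuous_const (continuous_id.dist continuous_const)
    have h2c : IsClosed {w : ℂ | dist w p ≤ r₂} :=
      isClosed_le (continuous_id.dist continuous_const) continuous_const
    have : K' = {w : ℂ | r₁ ≤ dist w p} ∩ {w : ℂ | dist w p ≤ r₂} := rfl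
    rw [this]; exact h1c.inter h2c
  have hclA : closure A ⊆ K' :=
    closure_minimal (fun w hw => ⟨hw.1.le, hw.2.le⟩) hK'closed
  have hK'U : K' ⊆ U := fun w hw => hann w hw.1 hw.2
  have hAU : A ⊆ U := fun w hw => hK'U ⟨hw.1.le, hw.2.le⟩
  set v : ℂ → ℝ := fun w => u w + ε * Real.log (dist w p) with hv
  have hlogcont : ∀ w : ℂ, dist w p ≠ 0 →
      ContinuousAt (fun y : ℂ => ε * Real.log (dist y p)) w := by
    intro w hne
    have hd : ContinuousAt (fun y : ℂ => dist y p) w :=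
      (continuous_id.dist continuous_const).continuousAt
    have hl : ContinuousAt Real.log (dist w p) := Real.continuousAt_log hne
    exact continuousAt_const.mul (ContinuousAt.comp (g := Real.log) hl hd)
  have huscv : UpperSemicontinuousOn v (closure A) := by
    apply UpperSemicontinuousOn.add
    · exact hsub.1.mono (hclA.trans hK'U)
    · apply ContinuousOn.upperSemicontinuousOn
      intro w hw
      exact (hlogcont w (lt_of_lt_of_le h1 (hclA hw).1).ne').continuousWithinAt
  have hsubv : SubharmonicOn v A := by
    constructor
    · exact huscv.mono subset_closure
    · intro w hw
      obtain ⟨r₀, hr₀, hsm⟩ := hsub.2 w (hAU hw)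
      obtain ⟨ρ, hρ, hball⟩ := Metric.isOpen_iff.1 hAopen w hw
      refine ⟨min r₀ ρ, lt_min hr₀ hρ, fun r hr hrlt => ?_⟩
      have hrr₀ : r < r₀ := lt_of_lt_of_le hrlt (min_le_left _ _)
      have hcbA : closedBall w r ⊆ A := fun y hy =>
        hball (lt_of_le_of_lt hy (lt_of_lt_of_le hrlt (min_le_right _ _)))
      refine ⟨hcbA, ?_⟩
      have hcbU : closedBall w r ⊆ U := hcbA.trans hAU
      have hpout : r < dist w p := by
        by_contra hle
        push_neg at hle
        have hpA : p ∈ A := hcbA (by rwa [mem_closedBall, dist_comm])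
        have h0 : r₁ < (0:ℝ) := by simpa [dist_self] using hpA.1
        linarith
      have hu_int : IntervalIntegrable (fun t => u (circleMap w r t)) volume 0 (2*Real.pi) :=
        circle_intervalIntegrable hU hsub.1 hC hcbU hr.le
      have hlog_int : IntervalIntegrable
          (fun t => ε * Real.log (dist (circleMap w r t) p)) volume 0 (2*Real.pi) := by
        apply ContinuousOn.intervalIntegrable
        intro t ht
        apply ContinuousAt.continuousWithinAt
        have hmem : circleMap w r t ∈ A := hcbA (circleMap_mem_closedBall w hr.le t)
        exact ContinuousAt.comp (g := fun y : ℂ => ε * Real.log (dist y p))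
          (hlogcont _ (h1.trans hmem.1).ne') (continuous_circleMap w r).continuousAt
      have hlogMV : (∫ t in (0:ℝ)..(2*Real.pi), Real.log (dist (circleMap w r t) p))
          = 2 * Real.pi * Real.log (dist w p) := by
        have := logAbsMean (c := w) (p := p) hr hpout
        simpa only [Complex.dist_eq] using this
      have hieqv : (∫ t in (0:ℝ)..(2*Real.pi),
          v (w + (r : ℂ) * Complex.exp ((t : ℂ) * Complex.I)))
          = (∫ t in (0:ℝ)..(2*Real.pi), u (circleMap w r t))
            + ε * (2 * Real.pi * Real.log (dist w p)) := by
        simp only [circleMap_eq', hv]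
        rw [intervalIntegral.integral_add hu_int hlog_int,
          intervalIntegral.integral_const_mul, hlogMV]
      have hu_ineq := (hsm r hr hrr₀).2
      rw [hieqv]
      have hpi : (0:ℝ) < 2 * Real.pi := Real.two_pi_pos
      have hmain : u w + ε * Real.log (dist w p)
          ≤ (1 / (2*Real.pi)) * ((∫ t in (0:ℝ)..(2*Real.pi), u (circleMap w r t))
              + ε * (2 * Real.pi * Real.log (dist w p))) := by
        rw [mul_add]
        have h2 : (1 / (2*Real.pi)) * (ε * (2 * Real.pi * Real.log (dist w p)))
            = ε * Real.log (dist w p) := by field_simp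
        rw [h2]
        apply add_le_add_left
        simpa only [circleMap_eq'] using hu_ineq
      exact hmain
  have hCbound : ∀ w ∈ closure A, |v w| ≤ C + |ε| * (|Real.log r₁| + |Real.log r₂|) := by
    intro w hw
    have hwK := hclA hw
    have hd1 : r₁ ≤ dist w p := hwK.1
    have hd2 : dist w p ≤ r₂ := hwK.2
    have hlog1 : Real.log r₁ ≤ Real.log (dist w p) := Real.log_le_log h1 hd1
    have hlog2 : Real.log (dist w p) ≤ Real.log r₂ :=
      Real.log_le_log (lt_of_lt_of_le h1 hd1) hd2
    have habs : |Real.log (dist w p)| ≤ |Real.log r₁| + |Real.log r₂| := by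
      rw [abs_le]
      constructor
      · have := neg_abs_le (Real.log r₁)
        have h0 := abs_nonneg (Real.log r₂)
        linarith
      · have := le_abs_self (Real.log r₂)
        have h0 := abs_nonneg (Real.log r₁)
        linarith
    calc |v w| ≤ |u w| + |ε * Real.log (dist w p)| := abs_add_le _ _
      _ ≤ C + |ε| * (|Real.log r₁| + |Real.log r₂|) := by
          rw [abs_mul]
          exact add_le_add (hC w (hK'U hwK)) (mul_le_mul_of_nonneg_left habs (abs_nonneg ε))
  have hzA : z ∈ A := ⟨hz1, hz2⟩
  obtain ⟨y, hyfr, hylev⟩ := boundaryMaxPrinciple hAopen hAb huscv hsubv hCbound hzA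
  have hyK : y ∈ K' := hclA (frontier_subset_closure hyfr)
  have hynA : y ∉ A := by
    rw [hAopen.frontier_eq] at hyfr
    exact hyfr.2
  refine ⟨y, ?_, hylev⟩
  rcases lt_or_eq_of_le hyK.1 with hlt1 | heq1
  · rcases lt_or_eq_of_le hyK.2 with hlt2 | heq2
    · exact absurd ⟨hlt1, hlt2⟩ hynA
    · exact Or.inr heq2
  · exact Or.inl heq1.symm

/-- Values near an isolated puncture are controlled by values on a surrounding circle. -/
theorem stepPuncture {U : Set ℂ} (hU : IsOpen U) {u : ℂ → ℝ} (hsub : SubharmonicOn u U)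
    {C : ℝ} (hC : ∀ z ∈ U, |u z| ≤ C) {p : ℂ} {R B : ℝ} (hR : 0 < R)
    (hUann : ∀ w : ℂ, w ≠ p → dist w p ≤ R → w ∈ U)
    (hsphere : ∀ w : ℂ, dist w p = R → u w ≤ B)
    {z : ℂ} (hzp : z ≠ p) (hzR : dist z p < R) : u z ≤ B := by
  set d := dist z p with hd
  have hdpos : 0 < d := dist_pos.2 hzp
  have hc : 0 < Real.log R - Real.log d := sub_pos.2 (Real.log_lt_log hdpos hzR)
  apply le_of_forall_pos_le_add
  intro η hη
  set ε := η / (Real.log R - Real.log d) with hε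
  have hεpos : 0 < ε := div_pos hη hc
  set δ : ℝ := min (d/2) (Real.exp ((B + ε * Real.log R - C)/ε)) with hδ
  have hδpos : 0 < δ := lt_min (by linarith) (Real.exp_pos _)
  have hδd : δ < d := lt_of_le_of_lt (min_le_left _ _) (by linarith)
  have hδR : δ < R := lt_trans hδd hzR
  have hlogδ : C + ε * Real.log δ ≤ B + ε * Real.log R := by
    have h1 : Real.log δ ≤ (B + ε * Real.log R - C)/ε := by
      calc Real.log δ ≤ Real.log (Real.exp ((B + ε * Real.log R - C)/ε)) :=
            Real.log_le_log hδpos (min_le_right _ _)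
        _ = (B + ε * Real.log R - C)/ε := Real.log_exp _
    have h2 : ε * Real.log δ ≤ B + ε * Real.log R - C := by
      have := mul_le_mul_of_nonneg_left h1 hεpos.le
      rwa [mul_div_cancel₀ _ hεpos.ne'] at this
    linarith
  have hann : ∀ w : ℂ, δ ≤ dist w p → dist w p ≤ R → w ∈ U := by
    intro w hw1 hw2
    exact hUann w (dist_pos.1 (lt_of_lt_of_le hδpos hw1)) hw2
  obtain ⟨y, hy, hylev⟩ := annulusBound hU hsub hC hδpos hδR hann ε hδd hzR
  have hyU : y ∈ U := by
    rcases hy with h | h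
    · exact hann y h.ge (h ▸ hδR.le)
    · exact hann y (h ▸ hδR.le) h.le
  have key : u z + ε * Real.log d ≤ B + ε * Real.log R := by
    rcases hy with h | h
    · calc u z + ε * Real.log d ≤ u y + ε * Real.log (dist y p) := hylev
        _ = u y + ε * Real.log δ := by rw [h]
        _ ≤ C + ε * Real.log δ := by linarith [(abs_le.1 (hC y hyU)).2]
        _ ≤ B + ε * Real.log R := hlogδ
    · calc u z + ε * Real.log d ≤ u y + ε * Real.log (dist y p) := hylev
        _ = u y + ε * Real.log R := by rw [h]
        _ ≤ B + ε * Real.log R := by linarith [hsphere y h]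
  have : u z ≤ B + ε * (Real.log R - Real.log d) := by linarith [key]; 
  rwa [hε, div_mul_cancel₀ _ hc.ne'] at this

/-- Values outside a large circle are controlled by values on the circle. -/
theorem stepInfinity {U : Set ℂ} (hU : IsOpen U) {u : ℂ → ℝ} (hsub : SubharmonicOn u U)
    {C : ℝ} (hC : ∀ z ∈ U, |u z| ≤ C) {p : ℂ} {R B : ℝ} (hR : 0 < R)
    (hUout : ∀ w : ℂ, R ≤ dist w p → w ∈ U)
    (hsphere : ∀ w : ℂ, dist w p = R → u w ≤ B)
    {z : ℂ} (hzR : R < dist z p) : u z ≤ B := by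
  set d := dist z p with hd
  have hdpos : 0 < d := lt_trans hR hzR
  have hc : 0 < Real.log d - Real.log R := sub_pos.2 (Real.log_lt_log hR hzR)
  apply le_of_forall_pos_le_add
  intro η hη
  set ε := η / (Real.log d - Real.log R) with hε
  have hεpos : 0 < ε := div_pos hη hc
  set S : ℝ := max (d+1) (Real.exp ((C - B + ε * Real.log R)/ε)) with hS
  have hSd : d < S := lt_of_lt_of_le (by linarith) (le_max_left _ _)
  have hSR : R < S := lt_trans hzR hSd
  have hSpos : 0 < S := lt_trans hR hSR
  have hlogS : C - ε * Real.log S ≤ B - ε * Real.log R := by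
    have h1 : (C - B + ε * Real.log R)/ε ≤ Real.log S := by
      calc (C - B + ε * Real.log R)/ε
          = Real.log (Real.exp ((C - B + ε * Real.log R)/ε)) := (Real.log_exp _).symm
        _ ≤ Real.log S := Real.log_le_log (Real.exp_pos _) (le_max_right _ _)
    have h2 : C - B + ε * Real.log R ≤ ε * Real.log S := by
      have := mul_le_mul_of_nonneg_left h1 hεpos.le
      rwa [mul_div_cancel₀ _ hεpos.ne'] at this
    linarith
  have hann : ∀ w : ℂ, R ≤ dist w p → dist w p ≤ S → w ∈ U := fun w hw1 _ => hUout w hw1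
  obtain ⟨y, hy, hylev⟩ := annulusBound hU hsub hC hR hSR hann (-ε) hzR hSd
  have hyU : y ∈ U := by
    rcases hy with h | h
    · exact hUout y h.ge
    · exact hUout y (h ▸ hSR.le)
  have key : u z - ε * Real.log d ≤ B - ε * Real.log R := by
    rcases hy with h | h
    · have := hylev
      rw [h] at this
      have h3 := hsphere y h
      simp only [neg_mul] at this
      linarith
    · have := hylev
      rw [h] at this
      have h3 := (abs_le.1 (hC y hyU)).2
      simp only [neg_mul] at this
      linarith [hlogS]
  have : u z ≤ B + ε * (Real.log d - Real.log R) := by linarith [key]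
  rwa [hε, div_mul_cancel₀ _ hc.ne'] at this

/-- **A bounded subharmonic function on the complement of a finite set in `ℂ` is
constant.** -/
theorem bounded_subharmonic_on_punctured_plane_constant
    (F : Finset ℂ) (u : ℂ → ℝ)
    (hsub : SubharmonicOn u ((F : Set ℂ))ᶜ)
    (hbd : ∃ M : ℝ, ∀ z ∈ ((F : Set ℂ))ᶜ, |u z| ≤ M) :
    ∃ c : ℝ, ∀ z ∈ ((F : Set ℂ))ᶜ, u z = c := by
  classical
  set U : Set ℂ := ((F : Set ℂ))ᶜ with hUdef
  have hUo : IsOpen U := (F.finite_toSet.isClosed).isOpen_compl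
  obtain ⟨M, hM⟩ := hbd
  have hconn : IsPreconnected U := by
    have h := Set.Countable.isPathConnected_compl_of_one_lt_rank (E := ℂ)
      (rank_real_complex ▸ Nat.one_lt_ofNat) (F.countable_toSet)
    exact h.isConnected.isPreconnected
  obtain ⟨r', hr'⟩ := (F.finite_toSet.isBounded).subset_ball 0
  set R₀ : ℝ := max r' 0 + 1 with hR₀def
  have hR₀pos : 0 < R₀ := by
    have := le_max_right r' 0
    simp only [hR₀def]; linarith
  have hFR : ∀ p ∈ (F : Set ℂ), dist p 0 ≤ R₀ - 1 := by
    intro p hp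
    have := hr' hp
    rw [mem_ball] at this
    have h2 := le_max_left r' 0
    simp only [hR₀def]
    linarith
  -- choice of radii around the punctures
  have hρchoice : ∀ p : ℂ, p ∈ (F : Set ℂ) →
      ∃ ρp : ℝ, 0 < ρp ∧ ρp < 1 ∧ ∀ q ∈ (F : Set ℂ), q ≠ p → 3 * ρp < dist p q := by
    intro p hp
    by_cases hne : (F.erase p).Nonempty
    · set dmin := (F.erase p).inf' hne (fun q => dist p q) with hdmin
      have hdpos : 0 < dmin := by
        rw [hdmin, Finset.lt_inf'_iff]
        intro q hq
        exact dist_pos.2 fun h => (Finset.mem_erase.1 hq).1 h.symm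
      refine ⟨min 1 dmin / 4, by positivity, ?_, ?_⟩
      · have : min 1 dmin ≤ 1 := min_le_left _ _
        linarith
      · intro q hq hqp
        have h1 : dmin ≤ dist p q := by
          rw [hdmin]
          exact Finset.inf'_le _ (Finset.mem_erase.2 ⟨hqp, hq⟩)
        have h2 : min 1 dmin ≤ dmin := min_le_right _ _
        linarith
    · refine ⟨1/2, by norm_num, by norm_num, ?_⟩
      intro q hq hqp
      exfalso
      exact hne ⟨q, Finset.mem_erase.2 ⟨hqp, hq⟩⟩
  choose! ρ hρpos hρlt1 hρsep using hρchoice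
  set K : Set ℂ := closedBall 0 R₀ \ ⋃ p ∈ (F : Set ℂ), ball p (ρ p) with hK
  have hKcomp : IsCompact K :=
    (isCompact_closedBall 0 R₀).diff (isOpen_biUnion fun p _ => isOpen_ball)
  have hKU : K ⊆ U := by
    intro w hw
    simp only [hUdef, Set.mem_compl_iff]
    intro hwF
    exact hw.2 (Set.mem_biUnion hwF (mem_ball_self (hρpos w hwF)))
  have hsphK : ∀ w : ℂ, dist w 0 = R₀ → w ∈ K := by
    intro w hwd
    refine ⟨mem_closedBall.2 hwd.le, ?_⟩
    intro hmem
    obtain ⟨p, hpF, hpball⟩ := Set.mem_iUnion₂.1 hmem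
    rw [mem_ball] at hpball
    have h1 : ρ p < 1 := hρlt1 p hpF
    have h2 := hFR p hpF
    have h3 : dist w 0 ≤ dist w p + dist p 0 := dist_triangle _ _ _
    rw [hwd] at h3
    linarith
  have hsppK : ∀ p ∈ (F : Set ℂ), ∀ w : ℂ, dist w p = ρ p → w ∈ K := by
    intro p hpF w hwd
    constructor
    · rw [mem_closedBall]
      have h3 : dist w 0 ≤ dist w p + dist p 0 := dist_triangle _ _ _
      have h1 := hρlt1 p hpF
      have h2 := hFR p hpF
      linarith
    · intro hmem
      obtain ⟨q, hqF, hqball⟩ := Set.mem_iUnion₂.1 hmem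
      rw [mem_ball] at hqball
      by_cases hqp : q = p
      · subst hqp
        rw [hwd] at hqball
        exact lt_irrefl _ hqball
      · have hsep1 : 3 * ρ p < dist p q := hρsep p hpF q hqF hqp
        have hsep2 : 3 * ρ q < dist q p := hρsep q hqF p hpF (fun h => hqp h.symm)
        rw [dist_comm q p] at hsep2
        have htri : dist p q ≤ dist p w + dist w q := dist_triangle _ _ _
        rw [dist_comm p w] at htri
        have h1 := hρpos p hpF
        have h2 := hρpos q hqF
        linarith
  have hKne : K.Nonempty := by
    refine ⟨(R₀ : ℂ), hsphK _ ?_⟩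
    rw [Complex.dist_eq, sub_zero, Complex.norm_real, Real.norm_eq_abs, abs_of_pos hR₀pos]
  obtain ⟨x, hxK, hxmax⟩ := uscMaxOn hKcomp hKne (hsub.1.mono hKU)
  have hxU : x ∈ U := hKU hxK
  have hglob : ∀ z ∈ U, u z ≤ u x := by
    intro z hzU
    by_cases hout : R₀ < dist z 0
    · refine stepInfinity hUo hsub hM (p := 0) hR₀pos ?_ ?_ hout
      · intro w hw
        simp only [hUdef, Set.mem_compl_iff]
        intro hwF
        have := hFR w hwF
        linarith
      · intro w hw
        exact hxmax w (hsphK w hw)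
    · push_neg at hout
      by_cases hin : ∃ p ∈ (F : Set ℂ), dist z p < ρ p
      · obtain ⟨p, hpF, hzp⟩ := hin
        have hznep : z ≠ p := by
          intro h
          rw [hUdef, Set.mem_compl_iff] at hzU
          exact hzU (h ▸ hpF)
        refine stepPuncture hUo hsub hM (hρpos p hpF) ?_ ?_ hznep hzp
        · intro w hwne hwd
          simp only [hUdef, Set.mem_compl_iff]
          intro hwF
          have hsep1 : 3 * ρ p < dist p w := hρsep p hpF w hwF hwne
          rw [dist_comm] at hsep1
          have := hρpos p hpF
          linarith
        · intro w hw
          exact hxmax w (hsppK p hpF w hw)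
      · push_neg at hin
        apply hxmax
        refine ⟨mem_closedBall.2 hout, ?_⟩
        intro hmem
        obtain ⟨q, hqF, hqball⟩ := Set.mem_iUnion₂.1 hmem
        rw [mem_ball] at hqball
        exact absurd hqball (not_lt.2 (hin q hqF))
  refine ⟨u x, ?_⟩
  exact strongMaxPrinciple hUo hconn hsub hM hxU hglob
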